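/- (Corollary 1, concrete form) Let S = Σ_{k,ℓ∈{0,1}} p_{kℓ} (|e_k⟩⟨e_k|) ⊗ (|h_ℓ⟩⟨h_ℓ|) be a classically correlated two-qubit state, where the p_{kℓ} are nonnegative reals summing to 1 and {e₀,e₁}, {h₀,h₁} are orthonormal bases of ℂ². Assume 1 − E_S(A⊗I)² > 0 and 1 − E_S(I⊗B)² > 0 for all dichotomic observables A, B. Then for every pair of complementary triples (A₁,A₂,A₃) and (B₁,B₂,B₃) of dichotomic observables, Σ_{i=1}^{3} |Cor_S(Aᵢ, Bᵢ)| ≤ 1. Consequently, any two-qubit state whose total correlations over a pair of complementary triples exceed 1 cannot be classically correlated. -/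

import Mathlib

open Matrix Complex
open scoped Kronecker ComplexConjugate ComplexOrder

noncomputable section

abbrev M2 : Type := Matrix (Fin 2) (Fin 2) ℂ
abbrev M4 : Type := Matrix (Fin 2 × Fin 2) (Fin 2 × Fin 2) ℂ

/-- Pauli matrix σ₁. -/
def σ1 : M2 := !![0, 1; 1, 0]
/-- Pauli matrix σ₂. -/
def σ2 : M2 := !![0, -Complex.I; Complex.I, 0]
/-- Pauli matrix σ₃. -/
def σ3 : M2 := !![1, 0; 0, -1]

/-- The Pauli triple (σ₁, σ₂, σ₃). -/
def pauli : Fin 3 → M2 := ![σ1, σ2, σ3]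

/-- A dichotomic observable: Hermitian, squares to the identity, traceless. -/
def Dichotomic (A : M2) : Prop := A.IsHermitian ∧ A * A = 1 ∧ A.trace = 0

/-- A complementary triple of dichotomic observables. -/
def ComplementaryTriple (X : Fin 3 → M2) : Prop :=
  (∀ i, Dichotomic (X i)) ∧ ∀ i j, i ≠ j → (X i * X j).trace = 0

/-- Expectation value E_S(A ⊗ B) = tr(S·(A⊗B)) (its real part; it is real for states and
Hermitian observables). -/
def EE (S : M4) (A B : M2) : ℝ := (Matrix.trace (S * (A ⊗ₖ B))).re

/-- Covariance of A and B in the state S. -/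
def Cov (S : M4) (A B : M2) : ℝ := EE S A B - EE S A 1 * EE S 1 B

/-- Variance of a dichotomic observable A measured on the first subsystem. -/
def Var1 (S : M4) (A : M2) : ℝ := 1 - (EE S A 1) ^ 2
/-- Variance of a dichotomic observable B measured on the second subsystem. -/
def Var2 (S : M4) (B : M2) : ℝ := 1 - (EE S 1 B) ^ 2

/-- The Pearson correlation coefficient of observables A and B in the state S. -/
def Cor (S : M4) (A B : M2) : ℝ := Cov S A B / Real.sqrt (Var1 S A * Var2 S B)

/-- The rank-one projection |v⟩⟨v| onto a vector v ∈ ℂ². -/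
def proj (v : Fin 2 → ℂ) : M2 := Matrix.vecMulVec v (star v)

/-- The family e₀, e₁ is an orthonormal basis of ℂ². -/
def IsOrthonormalBasis2 (e : Fin 2 → Fin 2 → ℂ) : Prop :=
  ∀ k l, ∑ j : Fin 2, (starRingEnd ℂ) (e k j) * e l j = if k = l then 1 else 0

/-- S is a classically correlated two-qubit state:
`S = Σ_{k,ℓ} p_{kℓ} |e_k⟩⟨e_k| ⊗ |h_ℓ⟩⟨h_ℓ|`. -/
def ClassicallyCorrelated (S : M4) : Prop :=
  ∃ (p : Fin 2 → Fin 2 → ℝ) (e h : Fin 2 → Fin 2 → ℂ),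
    (∀ k l, 0 ≤ p k l) ∧ (∑ k : Fin 2, ∑ l : Fin 2, p k l = 1) ∧
    IsOrthonormalBasis2 e ∧ IsOrthonormalBasis2 h ∧
    S = ∑ k : Fin 2, ∑ l : Fin 2, (p k l : ℂ) • (proj (e k) ⊗ₖ proj (h l))

lemma onb_complete {e : Fin 2 → Fin 2 → ℂ} (he : IsOrthonormalBasis2 e) :
    proj (e 0) + proj (e 1) = 1 := by
  have h1 : (Matrix.of e) * (Matrix.of e)ᴴ = 1 := by
    ext k l
    have h := congrArg conj (he k l)
    simp only [map_sum, _root_.map_mul, starRingEnd_self_apply, MonoidWithZeroHom.map_ite_one_zero,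
      starRingEnd_apply] at h
    simpa [Matrix.mul_apply, Matrix.conjTranspose_apply, Matrix.one_apply] using h
  have h2 : (Matrix.of e)ᴴ * (Matrix.of e) = 1 := mul_eq_one_comm.mp h1
  ext i j
  have h3 := congrArg (fun M : M2 => conj (M i j)) h2
  simp only [Matrix.mul_apply, Matrix.conjTranspose_apply, Matrix.of_apply, map_sum,
    _root_.map_mul, starRingEnd_self_apply, Matrix.one_apply, MonoidWithZeroHom.map_ite_one_zero,
    starRingEnd_apply, star_add, star_mul', star_star, Fin.sum_univ_two] at h3
  simp only [proj, Matrix.add_apply, Matrix.vecMulVec_apply, Pi.star_apply, Matrix.one_apply]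
  linear_combination h3

lemma trace_proj {e : Fin 2 → Fin 2 → ℂ} (he : IsOrthonormalBasis2 e) (k : Fin 2) :
    (proj (e k)).trace = 1 := by
  have h := he k k
  simp only [eq_self_iff_true, if_true, Fin.sum_univ_two] at h
  simp only [proj, Matrix.trace_fin_two, Matrix.vecMulVec_apply, Pi.star_apply,
    starRingEnd_apply] at *
  linear_combination h

lemma proj_sq {e : Fin 2 → Fin 2 → ℂ} (he : IsOrthonormalBasis2 e) (k : Fin 2) :
    proj (e k) * proj (e k) = proj (e k) := by
  have h := he k k
  simp only [eq_self_iff_true, if_true, Fin.sum_univ_two] at h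
  ext i j
  simp only [proj, Matrix.mul_apply, Matrix.vecMulVec_apply, Pi.star_apply, Fin.sum_univ_two,
    starRingEnd_apply] at *
  linear_combination (e k i * star (e k j)) * h

lemma proj_herm (v : Fin 2 → ℂ) : (proj v).IsHermitian := by
  ext i j
  simp [proj, Matrix.conjTranspose_apply, Matrix.vecMulVec_apply, mul_comm]

lemma tau_conj (v : Fin 2 → ℂ) {A : M2} (hA : A.IsHermitian) :
    conj ((proj v * A).trace) = (proj v * A).trace := by
  have h10 : star (A 0 1) = A 1 0 := hA.apply 1 0
  have h01 : star (A 1 0) = A 0 1 := hA.apply 0 1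
  have h00 : star (A 0 0) = A 0 0 := hA.apply 0 0
  have h11 : star (A 1 1) = A 1 1 := hA.apply 1 1
  simp only [Matrix.trace_fin_two, Matrix.mul_apply, Fin.sum_univ_two, proj,
    Matrix.vecMulVec_apply, Pi.star_apply, map_add, _root_.map_mul, starRingEnd_apply,
    star_star, star_mul']
  rw [h10, h01, h00, h11]
  ring

lemma tau_second {e : Fin 2 → Fin 2 → ℂ} (he : IsOrthonormalBasis2 e) {A : M2}
    (hA : A.trace = 0) : (proj (e 1) * A).trace = -(proj (e 0) * A).trace := by
  have hc : proj (e 1) = 1 - proj (e 0) := by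
    have := onb_complete he; linear_combination (norm := module) this
  rw [hc, Matrix.sub_mul, Matrix.one_mul, trace_sub, hA]
  ring

def bloch (X : M2) : Fin 3 → ℝ := ![(X 0 1).re, (X 0 1).im, (X 0 0).re]

lemma trace_mul_re_eq {X Y : M2} (hX : X.IsHermitian) (hXt : X.trace = 0)
    (hY : Y.IsHermitian) (hYt : Y.trace = 0) :
    ((X * Y).trace).re = 2 * (bloch X ⬝ᵥ bloch Y) := by
  have hX10 : X 1 0 = conj (X 0 1) := (hX.apply 1 0).symm
  have hY10 : Y 1 0 = conj (Y 0 1) := (hY.apply 1 0).symm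
  have hX11 : X 1 1 = -X 0 0 := by
    simp only [Matrix.trace_fin_two] at hXt; linear_combination hXt
  have hY11 : Y 1 1 = -Y 0 0 := by
    simp only [Matrix.trace_fin_two] at hYt; linear_combination hYt
  have hX00 : (X 0 0).im = 0 := by
    have h := hX.apply 0 0
    rw [Complex.star_def, Complex.conj_eq_iff_im] at h; exact h
  have hY00 : (Y 0 0).im = 0 := by
    have h := hY.apply 0 0
    rw [Complex.star_def, Complex.conj_eq_iff_im] at h; exact h
  simp only [Matrix.trace_fin_two, Matrix.mul_apply, Fin.sum_univ_two, hX10, hX11, hY10, hY11,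
    bloch, dotProduct, Fin.sum_univ_three, Matrix.cons_val_zero, Matrix.cons_val_one,
    Matrix.head_cons, Matrix.cons_val_two, Matrix.tail_cons, Complex.add_re, Complex.mul_re, Complex.neg_re, Complex.neg_im,
    Complex.conj_re, Complex.conj_im, hX00, hY00]
  ring

lemma bloch_self {X : M2} (hX : X.IsHermitian) (hXt : X.trace = 0) (hX2 : X * X = 1) :
    bloch X ⬝ᵥ bloch X = 1 := by
  have h := trace_mul_re_eq hX hXt hX hXt
  rw [hX2] at h
  simp only [Matrix.trace_one] at h
  norm_num at h
  simp only [dotProduct, Fin.sum_univ_three] at h ⊢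
  linarith

lemma gram_sum {A : Fin 3 → M2} (hA : ComplementaryTriple A) (m : Fin 3 → ℝ)
    (hm : m ⬝ᵥ m = 1) : ∑ i : Fin 3, (m ⬝ᵥ bloch (A i)) ^ 2 = 1 := by
  set G : Matrix (Fin 3) (Fin 3) ℝ := Matrix.of (fun i => bloch (A i)) with hGdef
  have hG : G * Gᵀ = 1 := by
    ext i j
    have hij : (G * Gᵀ) i j = bloch (A i) ⬝ᵥ bloch (A j) := by
      simp [hGdef, Matrix.mul_apply, dotProduct]
    rw [hij]
    rcases eq_or_ne i j with h | h
    · subst h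
      rw [bloch_self (hA.1 i).1 (hA.1 i).2.2 (hA.1 i).2.1]
      simp
    · have ht := hA.2 i j h
      have := trace_mul_re_eq (hA.1 i).1 (hA.1 i).2.2 (hA.1 j).1 (hA.1 j).2.2
      rw [ht] at this
      simp only [Complex.zero_re] at this
      rw [Matrix.one_apply_ne h]
      linarith
  have hG2 : Gᵀ * G = 1 := mul_eq_one_comm.mp hG
  have key : ∀ k l : Fin 3, ∑ i : Fin 3, bloch (A i) k * bloch (A i) l
      = if k = l then 1 else 0 := by
    intro k l
    have := congrFun (congrFun hG2 k) l
    simpa [hGdef, Matrix.mul_apply, Matrix.one_apply, mul_comm] using this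
  have e00 := key 0 0; have e01 := key 0 1; have e02 := key 0 2
  have e11 := key 1 1; have e12 := key 1 2; have e22 := key 2 2
  have e10 := key 1 0; have e20 := key 2 0; have e21 := key 2 1
  simp only [Fin.sum_univ_three, dotProduct] at *
  norm_num [Fin.ext_iff] at e00 e01 e02 e11 e12 e22 e10 e20 e21 ⊢
  linear_combination (m 0)^2 * e00 + (m 1)^2 * e11 + (m 2)^2 * e22 + (2 * m 0 * m 1) * e01 +
    (2 * m 0 * m 2) * e02 + (2 * m 1 * m 2) * e12 + hm

lemma sum_x_sq {e : Fin 2 → Fin 2 → ℂ} (he : IsOrthonormalBasis2 e) {A : Fin 3 → M2}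
    (hA : ComplementaryTriple A) :
    ∑ i : Fin 3, (((proj (e 0) * A i).trace).re) ^ 2 = 1 := by
  set M : M2 := (2 : ℂ) • proj (e 0) - 1 with hM
  have hp : (proj (e 0))ᴴ = proj (e 0) := proj_herm (e 0)
  have hMh : M.IsHermitian := by
    show Mᴴ = M
    rw [hM, Matrix.conjTranspose_sub, Matrix.conjTranspose_smul, hp, Matrix.conjTranspose_one]
    norm_num
  have hMt : M.trace = 0 := by
    rw [hM, Matrix.trace_sub, Matrix.trace_smul, trace_proj he 0, Matrix.trace_one]
    simp
  have hM2 : M * M = 1 := by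
    rw [hM]
    rw [Matrix.sub_mul, Matrix.mul_sub, Matrix.mul_sub, Matrix.smul_mul, Matrix.mul_smul,
      Matrix.one_mul, Matrix.mul_one, smul_smul, proj_sq he 0]
    ext i j
    simp [Matrix.sub_apply, Matrix.smul_apply, smul_eq_mul]
    ring
  have hx : ∀ i, ((proj (e 0) * A i).trace).re = bloch M ⬝ᵥ bloch (A i) := by
    intro i
    have h1 := trace_mul_re_eq hMh hMt (hA.1 i).1 (hA.1 i).2.2
    have h2 : M * A i = (2 : ℂ) • (proj (e 0) * A i) - A i := by
      rw [hM, Matrix.sub_mul, Matrix.smul_mul, Matrix.one_mul]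
    rw [h2, Matrix.trace_sub, Matrix.trace_smul, (hA.1 i).2.2] at h1
    simp only [sub_zero, smul_eq_mul, Complex.mul_re, Complex.re_ofNat, Complex.im_ofNat,
      Complex.ofReal_re] at h1
    simp only [zero_mul, sub_zero] at h1
    linarith
  simp only [hx]
  exact gram_sum hA (bloch M) (bloch_self hMh hMt hM2)

lemma trace_S_mul (p : Fin 2 → Fin 2 → ℝ) (e h : Fin 2 → Fin 2 → ℂ) (A B : M2) :
    ((∑ k : Fin 2, ∑ l : Fin 2, (p k l : ℂ) • (proj (e k) ⊗ₖ proj (h l))) * (A ⊗ₖ B)).trace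
      = ∑ k : Fin 2, ∑ l : Fin 2,
          (p k l : ℂ) * ((proj (e k) * A).trace * (proj (h l) * B).trace) := by
  rw [Finset.sum_mul]
  rw [Matrix.trace_sum]
  congr 1; ext k
  rw [Finset.sum_mul, Matrix.trace_sum]
  congr 1; ext l
  rw [Matrix.smul_mul, Matrix.trace_smul, ← Matrix.mul_kronecker_mul, Matrix.trace_kronecker,
    smul_eq_mul]

lemma pearson_bound (a b c d : ℝ) (ha : 0 ≤ a) (hb : 0 ≤ b) (hc : 0 ≤ c) (hd : 0 ≤ d)
    (hs : a + b + c + d = 1) :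
    ((a - b - c + d) - (a + b - c - d) * (a - b + c - d)) ^ 2
      ≤ (1 - (a + b - c - d) ^ 2) * (1 - (a - b + c - d) ^ 2) := by
  nlinarith [mul_nonneg ha hb, mul_nonneg ha hc, mul_nonneg ha hd, mul_nonneg hb hc,
    mul_nonneg hb hd, mul_nonneg hc hd, sq_nonneg (a*d - b*c), sq_nonneg (a+d), sq_nonneg (b+c),
    mul_nonneg (mul_nonneg ha hb) hc, mul_nonneg (mul_nonneg ha hb) hd,
    mul_nonneg (mul_nonneg ha hc) hd, mul_nonneg (mul_nonneg hb hc) hd]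

lemma alpha_sq_le (a b c d : ℝ) (ha : 0 ≤ a) (hb : 0 ≤ b) (hc : 0 ≤ c) (hd : 0 ≤ d)
    (hs : a + b + c + d = 1) : (a + b - c - d) ^ 2 ≤ 1 := by
  nlinarith [mul_nonneg ha hc, mul_nonneg ha hd, mul_nonneg hb hc, mul_nonneg hb hd,
    mul_nonneg ha hb, mul_nonneg hc hd]

lemma sq_le_one_imp (s : ℝ) (h0 : 0 ≤ s) (hsq : s ^ 2 ≤ 1 * 1) : s ≤ 1 := by nlinarith

lemma main_bound (S : M4) (hCC : ClassicallyCorrelated S)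
    (h1 : ∀ A : M2, Dichotomic A → 0 < 1 - (EE S A 1) ^ 2)
    (h2 : ∀ B : M2, Dichotomic B → 0 < 1 - (EE S 1 B) ^ 2)
    (A B : Fin 3 → M2) (hA : ComplementaryTriple A) (hB : ComplementaryTriple B) :
    ∑ i : Fin 3, |Cor S (A i) (B i)| ≤ 1 := by
  obtain ⟨p, e, h, hp, hsum, he, hh, hS⟩ := hCC
  simp only [Fin.sum_univ_two] at hsum
  obtain ⟨x, hx⟩ : ∃ x : Fin 3 → ℝ, ∀ i, (proj (e 0) * A i).trace = ((x i : ℝ) : ℂ) :=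
    ⟨_, fun i => (Complex.conj_eq_iff_re.mp (tau_conj _ (hA.1 i).1)).symm⟩
  obtain ⟨y, hy⟩ : ∃ y : Fin 3 → ℝ, ∀ i, (proj (h 0) * B i).trace = ((y i : ℝ) : ℂ) :=
    ⟨_, fun i => (Complex.conj_eq_iff_re.mp (tau_conj _ (hB.1 i).1)).symm⟩
  have hEAB : ∀ i, EE S (A i) (B i)
      = (p 0 0 - p 0 1 - p 1 0 + p 1 1) * (x i * y i) := by
    intro i
    rw [EE, hS, trace_S_mul]
    simp only [Fin.sum_univ_two]
    rw [tau_second he (hA.1 i).2.2, tau_second hh (hB.1 i).2.2, hx i, hy i]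
    simp only [Complex.add_re, Complex.mul_re, Complex.neg_re, Complex.neg_im,
      Complex.ofReal_re, Complex.ofReal_im]
    ring
  have hEA1 : ∀ i, EE S (A i) 1 = (p 0 0 + p 0 1 - p 1 0 - p 1 1) * x i := by
    intro i
    rw [EE, hS, trace_S_mul]
    simp only [Fin.sum_univ_two, Matrix.mul_one]
    rw [tau_second he (hA.1 i).2.2, hx i, trace_proj hh 0, trace_proj hh 1]
    simp only [Complex.add_re, Complex.mul_re, mul_one, Complex.neg_re,
      Complex.neg_im, Complex.ofReal_re, Complex.ofReal_im]
    ring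
  have hE1B : ∀ i, EE S 1 (B i) = (p 0 0 - p 0 1 + p 1 0 - p 1 1) * y i := by
    intro i
    rw [EE, hS, trace_S_mul]
    simp only [Fin.sum_univ_two, Matrix.mul_one]
    rw [tau_second hh (hB.1 i).2.2, hy i, trace_proj he 0, trace_proj he 1]
    simp only [Complex.add_re, Complex.mul_re, one_mul, Complex.neg_re,
      Complex.neg_im, Complex.ofReal_re, Complex.ofReal_im]
    ring
  have hxs : ∑ i : Fin 3, x i ^ 2 = 1 := by
    have h0 := sum_x_sq he hA
    simp only [hx, Complex.ofReal_re] at h0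
    exact h0
  have hys : ∑ i : Fin 3, y i ^ 2 = 1 := by
    have h0 := sum_x_sq hh hB
    simp only [hy, Complex.ofReal_re] at h0
    exact h0
  have hx1 : ∀ i, x i ^ 2 ≤ 1 := by
    intro i; rw [← hxs]
    exact Finset.single_le_sum (f := fun i => x i ^ 2) (fun j _ => sq_nonneg _)
      (Finset.mem_univ i)
  have hy1 : ∀ i, y i ^ 2 ≤ 1 := by
    intro i; rw [← hys]
    exact Finset.single_le_sum (f := fun i => y i ^ 2) (fun j _ => sq_nonneg _)
      (Finset.mem_univ i)
  have hp00 := hp 0 0; have hp01 := hp 0 1; have hp10 := hp 1 0; have hp11 := hp 1 1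
  have key : ∀ i, |Cor S (A i) (B i)| ≤ |x i| * |y i| := by
    intro i
    have hV1 : 0 < Var1 S (A i) := h1 (A i) (hA.1 i)
    have hV2 : 0 < Var2 S (B i) := h2 (B i) (hB.1 i)
    have hCov : Cov S (A i) (B i)
        = ((p 0 0 - p 0 1 - p 1 0 + p 1 1)
            - (p 0 0 + p 0 1 - p 1 0 - p 1 1) * (p 0 0 - p 0 1 + p 1 0 - p 1 1)) * (x i * y i) := by
      rw [Cov, hEAB i, hEA1 i, hE1B i]; ring
    have hVar1 : Var1 S (A i) = 1 - ((p 0 0 + p 0 1 - p 1 0 - p 1 1) * x i) ^ 2 := by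
      rw [Var1, hEA1 i]
    have hVar2 : Var2 S (B i) = 1 - ((p 0 0 - p 0 1 + p 1 0 - p 1 1) * y i) ^ 2 := by
      rw [Var2, hE1B i]
    have hPearson := pearson_bound (p 0 0) (p 0 1) (p 1 0) (p 1 1) hp00 hp01 hp10 hp11 (by linarith)
    have hα : (p 0 0 + p 0 1 - p 1 0 - p 1 1) ^ 2 ≤ 1 :=
      alpha_sq_le (p 0 0) (p 0 1) (p 1 0) (p 1 1) hp00 hp01 hp10 hp11 (by linarith)
    have hβ : (p 0 0 - p 0 1 + p 1 0 - p 1 1) ^ 2 ≤ 1 := by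
      have h5 := alpha_sq_le (p 0 0) (p 1 0) (p 0 1) (p 1 1) hp00 hp10 hp01 hp11 (by linarith)
      have heq : (p 0 0 + p 1 0 - p 0 1 - p 1 1) ^ 2
          = (p 0 0 - p 0 1 + p 1 0 - p 1 1) ^ 2 := by ring
      linarith
    have hmono1 : 1 - (p 0 0 + p 0 1 - p 1 0 - p 1 1) ^ 2 ≤ Var1 S (A i) := by
      rw [hVar1]
      have : ((p 0 0 + p 0 1 - p 1 0 - p 1 1) * x i) ^ 2
          ≤ (p 0 0 + p 0 1 - p 1 0 - p 1 1) ^ 2 := by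
        rw [mul_pow]
        exact mul_le_of_le_one_right (sq_nonneg _) (hx1 i)
      linarith
    have hmono2 : 1 - (p 0 0 - p 0 1 + p 1 0 - p 1 1) ^ 2 ≤ Var2 S (B i) := by
      rw [hVar2]
      have : ((p 0 0 - p 0 1 + p 1 0 - p 1 1) * y i) ^ 2
          ≤ (p 0 0 - p 0 1 + p 1 0 - p 1 1) ^ 2 := by
        rw [mul_pow]
        exact mul_le_of_le_one_right (sq_nonneg _) (hy1 i)
      linarith
    have hCov2 : Cov S (A i) (B i) ^ 2 ≤ (x i * y i) ^ 2 * (Var1 S (A i) * Var2 S (B i)) := by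
      rw [hCov]
      have h4 : ((p 0 0 - p 0 1 - p 1 0 + p 1 1)
          - (p 0 0 + p 0 1 - p 1 0 - p 1 1) * (p 0 0 - p 0 1 + p 1 0 - p 1 1)) ^ 2
          ≤ Var1 S (A i) * Var2 S (B i) := by
        calc _ ≤ (1 - (p 0 0 + p 0 1 - p 1 0 - p 1 1) ^ 2)
              * (1 - (p 0 0 - p 0 1 + p 1 0 - p 1 1) ^ 2) := hPearson
          _ ≤ Var1 S (A i) * Var2 S (B i) := by
              apply mul_le_mul hmono1 hmono2 (by nlinarith) hV1.le
      calc (_ * (x i * y i)) ^ 2 = ((p 0 0 - p 0 1 - p 1 0 + p 1 1)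
          - (p 0 0 + p 0 1 - p 1 0 - p 1 1) * (p 0 0 - p 0 1 + p 1 0 - p 1 1)) ^ 2
            * (x i * y i) ^ 2 := by ring
        _ ≤ (Var1 S (A i) * Var2 S (B i)) * (x i * y i) ^ 2 :=
            mul_le_mul_of_nonneg_right h4 (sq_nonneg _)
        _ = (x i * y i) ^ 2 * (Var1 S (A i) * Var2 S (B i)) := by ring
    have hVpos : 0 < Real.sqrt (Var1 S (A i) * Var2 S (B i)) :=
      Real.sqrt_pos.mpr (mul_pos hV1 hV2)
    have habs : |Cov S (A i) (B i)| ≤ |x i * y i| * Real.sqrt (Var1 S (A i) * Var2 S (B i)) := by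
      have := Real.sqrt_le_sqrt hCov2
      rwa [Real.sqrt_sq_eq_abs, Real.sqrt_mul (sq_nonneg _), Real.sqrt_sq_eq_abs] at this
    rw [Cor, abs_div, _root_.abs_of_nonneg (Real.sqrt_nonneg _), div_le_iff₀ hVpos]
    calc |Cov S (A i) (B i)| ≤ |x i * y i| * Real.sqrt (Var1 S (A i) * Var2 S (B i)) := habs
      _ = |x i| * |y i| * Real.sqrt (Var1 S (A i) * Var2 S (B i)) := by rw [abs_mul]
  calc ∑ i : Fin 3, |Cor S (A i) (B i)| ≤ ∑ i : Fin 3, |x i| * |y i| :=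
        Finset.sum_le_sum fun i _ => key i
    _ ≤ 1 := by
        have hcs := Finset.sum_mul_sq_le_sq_mul_sq Finset.univ (fun i => |x i|) (fun i => |y i|)
        simp only [_root_.sq_abs] at hcs
        rw [hxs, hys] at hcs
        have h0 : 0 ≤ ∑ i : Fin 3, |x i| * |y i| :=
          Finset.sum_nonneg fun i _ => mul_nonneg (abs_nonneg _) (abs_nonneg _)
        exact sq_le_one_imp _ h0 hcs

/-- Corollary 1: for a classically correlated two-qubit state with positive
variances, the total correlations over any pair of complementary triples are at most 1;
consequently, a state whose total correlations exceed 1 cannot be classically correlated. -/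
theorem classically_correlated_total_correlations_le_one :
    (∀ S : M4, ClassicallyCorrelated S →
      (∀ A : M2, Dichotomic A → 0 < 1 - (EE S A 1) ^ 2) →
      (∀ B : M2, Dichotomic B → 0 < 1 - (EE S 1 B) ^ 2) →
      ∀ A B : Fin 3 → M2, ComplementaryTriple A → ComplementaryTriple B →
        ∑ i : Fin 3, |Cor S (A i) (B i)| ≤ 1) ∧
    (∀ S : M4,
      (∀ A : M2, Dichotomic A → 0 < 1 - (EE S A 1) ^ 2) →
      (∀ B : M2, Dichotomic B → 0 < 1 - (EE S 1 B) ^ 2) →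
      (∃ A B : Fin 3 → M2, ComplementaryTriple A ∧ ComplementaryTriple B ∧
        1 < ∑ i : Fin 3, |Cor S (A i) (B i)|) →
      ¬ ClassicallyCorrelated S) := by
  constructor
  · exact fun S hCC h1 h2 A B hA hB => main_bound S hCC h1 h2 A B hA hB
  · rintro S h1 h2 ⟨A, B, hA, hB, hgt⟩ hCC
    exact absurd (main_bound S hCC h1 h2 A B hA hB) (not_le.mpr hgt)
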